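/- Let $M$ be a module over an archimedean subsemiring $S$ of a commutative ring $A$, and let $f \in A$ with $\phi(f) > 0$ for every ring homomorphism $\phi: A \to \mathbb{R}$ with $\phi|_M \geq 0$. Then $nf \in M$ for some $n \in \mathbb{N}$. (Representation Theorem of Stone–Krivine–Kadison–Dubois.) -/

import Mathlib

set_option linter.unusedTactic false
set_option maxHeartbeats 1000000

namespace KDAux

variable {A : Type*} [CommRing A] {S M : Set A}

/-- graphs of partial states -/
def IsGraph (M : Set A) (G : Set (A × ℝ)) : Prop :=
  ((1 : A), (1 : ℝ)) ∈ G ∧ (∀ p ∈ G, ∀ q ∈ G, p + q ∈ G) ∧ (∀ p ∈ G, -p ∈ G) ∧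
    (∀ p ∈ G, p.1 ∈ M → 0 ≤ p.2)

theorem IsGraph.zero {G : Set (A × ℝ)} (hG : IsGraph M G) : ((0 : A), (0 : ℝ)) ∈ G := by
  have := hG.2.2.1 _ hG.1
  have := hG.2.1 _ hG.1 _ this
  simpa using this

theorem IsGraph.zsmul {G : Set (A × ℝ)} (hG : IsGraph M G) {p : A × ℝ} (hp : p ∈ G) (n : ℤ) :
    ((n : A) * p.1, (n : ℝ) * p.2) ∈ G := by
  induction n using Int.induction_on with
  | zero => simpa using hG.zero
  | succ k ih =>
      have := hG.2.1 _ ih _ hp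
      convert this using 2 <;> · simp [Prod.fst, Prod.snd]; push_cast; ring
  | pred k ih =>
      have := hG.2.1 _ ih _ (hG.2.2.1 _ hp)
      convert this using 2 <;> · simp [Prod.fst, Prod.snd]; push_cast; ring

theorem natS (hS0 : (0 : A) ∈ S) (hS1 : (1 : A) ∈ S)
    (hSadd : ∀ x ∈ S, ∀ y ∈ S, x + y ∈ S) : ∀ n : ℕ, (n : A) ∈ S := by
  intro n
  induction n with
  | zero => simpa using hS0
  | succ k ih => push_cast; exact hSadd _ ih _ hS1


theorem natM (hM1 : (1 : A) ∈ M) (hMadd : ∀ x ∈ M, ∀ y ∈ M, x + y ∈ M)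
    (hM0 : (0 : A) ∈ M) : ∀ n : ℕ, (n : A) ∈ M := by
  intro n
  induction n with
  | zero => simpa using hM0
  | succ k ih => push_cast; exact hMadd _ ih _ hM1

/-- if some negative integer lies in `M`, then `M` is everything. -/
theorem degenerate (hMadd : ∀ x ∈ M, ∀ y ∈ M, x + y ∈ M)
    (hM0 : (0 : A) ∈ M) (hM1 : (1 : A) ∈ M)
    (archM : ∀ a : A, ∃ n : ℕ, (n : A) + a ∈ M)
    {k : ℕ} (hk : 0 < k) (hkM : (-(k : A)) ∈ M) : ∀ a : A, a ∈ M := by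
  intro a
  obtain ⟨j, hj⟩ := archM a
  -- a = ((j:A) + a) + ((j*k - j : ℕ) : A) + j • (-(k:A))
  have hsmul : ∀ m : ℕ, m • (-(k : A)) ∈ M := by
    intro m
    induction m with
    | zero => simpa using hM0
    | succ i ih =>
        have := hMadd _ ih _ hkM
        rw [succ_nsmul]
        exact this
  have h1 : ((j : A) + a) + ((j * k - j : ℕ) : A) ∈ M :=
    hMadd _ hj _ (natM hM1 hMadd hM0 _)
  have h2 : (((j : A) + a) + ((j * k - j : ℕ) : A)) + j • (-(k : A)) ∈ M :=
    hMadd _ h1 _ (hsmul j)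
  have hle : j ≤ j * k := Nat.le_mul_of_pos_right j hk
  have key : (((j : A) + a) + ((j * k - j : ℕ) : A)) + j • (-(k : A)) = a := by
    have : ((j * k - j : ℕ) : A) = (j * k : ℕ) - (j : ℕ) := by
      push_cast [Nat.cast_sub hle]; ring
    rw [this, nsmul_eq_mul]
    push_cast
    ring
  rwa [key] at h2


theorem intM (hnd : ¬ ∃ k : ℕ, 0 < k ∧ (-(k : A)) ∈ M) :
    ∀ j : ℤ, ((j : A) ∈ M → 0 ≤ j) := by
  intro j hj
  by_contra hneg
  push_neg at hneg
  refine hnd ⟨(-j).toNat, ?_, ?_⟩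
  · omega
  · have hcast : (((-j).toNat : ℕ) : A) = -(j : A) := by
      have : (((-j).toNat : ℕ) : ℤ) = -j := by omega
      calc (((-j).toNat : ℕ) : A) = ((((-j).toNat : ℕ) : ℤ) : A) := by push_cast; ring
      _ = ((-j : ℤ) : A) := by rw [this]
      _ = -(j : A) := by push_cast; ring
    rw [hcast]
    simpa using hj

section AddHelpers

variable {L : A → ℝ} (hadd : ∀ x y, L (x + y) = L x + L y)

include hadd

theorem Lzero : L 0 = 0 := by have := hadd 0 0; simp at this; linarith

theorem Lneg (x : A) : L (-x) = - L x := by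
  have h1 := hadd x (-x)
  simp at h1
  have := Lzero hadd
  rw [this] at h1
  linarith

theorem Lsub (x y : A) : L (x - y) = L x - L y := by
  have := hadd (x - y) y
  simp at this
  linarith

theorem Lintmul : ∀ (j : ℤ) (x : A), L ((j : A) * x) = j * L x := by
  intro j
  induction j using Int.induction_on with
  | zero => intro x; simpa using Lzero hadd
  | succ k ih =>
      intro x
      have : (((k : ℤ) + 1 : ℤ) : A) * x = ((k : ℤ) : A) * x + x := by push_cast; ring
      rw [this, hadd, ih]
      push_cast
      ring
  | pred k ih =>
      intro x
      have : ((-(k : ℤ) - 1 : ℤ) : A) * x = ((-(k : ℤ) : ℤ) : A) * x + (-x) := by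
        push_cast; ring
      rw [this, hadd, ih, Lneg hadd]
      push_cast
      ring

theorem Lint (h1 : L 1 = 1) (j : ℤ) : L ((j : A)) = j := by
  have := Lintmul hadd j 1
  simpa [h1] using this

end AddHelpers

theorem IsGraph.cross {G : Set (A × ℝ)} (hG : IsGraph M G)
    (hMadd : ∀ x ∈ M, ∀ y ∈ M, x + y ∈ M)
    (hnatM : ∀ n : ℕ, ∀ x ∈ M, (n : A) * x ∈ M)
    {a h h' : A} {t t' : ℝ} {q q' : ℕ}
    (hpG : (h, t) ∈ G) (hp'G : (h', t') ∈ G)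
    (h1 : h + (q : A) * a ∈ M) (h2 : h' - (q' : A) * a ∈ M) :
    0 ≤ (q' : ℝ) * t + (q : ℝ) * t' := by
  have e1 := hG.zsmul hpG (q' : ℤ)
  have e2 := hG.zsmul hp'G (q : ℤ)
  have e3 := hG.2.1 _ e1 _ e2
  have e4 : (((q' : A) * h + (q : A) * h', (q' : ℝ) * t + (q : ℝ) * t') : A × ℝ) ∈ G := by
    convert e3 using 2 <;> · simp; try push_cast; try ring
  have hfst : (q' : A) * h + (q : A) * h' ∈ M := by
    have : (q' : A) * h + (q : A) * h' =
        (q' : A) * (h + (q : A) * a) + (q : A) * (h' - (q' : A) * a) := by ring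
    rw [this]
    exact hMadd _ (hnatM q' _ h1) _ (hnatM q _ h2)
  exact hG.2.2.2 _ e4 hfst


theorem exists_beta
    (hMadd : ∀ x ∈ M, ∀ y ∈ M, x + y ∈ M)
    (hnatM : ∀ n : ℕ, ∀ x ∈ M, (n : A) * x ∈ M)
    (natM' : ∀ n : ℕ, (n : A) ∈ M)
    (archM1 : ∀ a : A, ∃ n : ℕ, (n : A) - a ∈ M)
    (archM2 : ∀ a : A, ∃ n : ℕ, (n : A) + a ∈ M)
    (hnd : ¬ ∃ k : ℕ, 0 < k ∧ (-(k : A)) ∈ M)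
    (f : A) (hnf : ∀ q : ℕ, 0 < q → (q : A) * f ∉ M) :
    ∃ β : ℝ, β ≤ 0 ∧ ∀ p q : ℤ, ((p : A) + (q : A) * f ∈ M) → 0 ≤ (p : ℝ) + (q : ℝ) * β := by
  classical
  set U : Set ℝ := {r : ℝ | ∃ (p : ℤ) (q : ℕ), 0 < q ∧ ((p : A) - (q : A) * f ∈ M) ∧
    r = (p : ℝ) / (q : ℝ)} with hU
  have hUne : U.Nonempty := by
    obtain ⟨n, hn⟩ := archM1 f
    refine ⟨(n : ℝ), (n : ℤ), 1, one_pos, ?_, by simp⟩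
    push_cast
    simpa using hn
  have hbdd : BddBelow U := by
    obtain ⟨n₀, hn₀⟩ := archM2 f
    refine ⟨-(n₀ : ℝ), ?_⟩
    rintro r ⟨p, q, hq, hpq, rfl⟩
    have hmem : ((q * n₀ + p : ℤ) : A) ∈ M := by
      have heq : ((q * n₀ + p : ℤ) : A) = (q : A) * ((n₀ : A) + f) + ((p : A) - (q : A) * f) := by
        push_cast; ring
      rw [heq]
      exact hMadd _ (hnatM q _ hn₀) _ hpq
    have hint : (0 : ℤ) ≤ q * n₀ + p := intM hnd _ hmem
    have hqR : (0 : ℝ) < (q : ℝ) := by exact_mod_cast hq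
    rw [le_div_iff₀ hqR]
    have : (0 : ℝ) ≤ (q : ℝ) * (n₀ : ℝ) + (p : ℝ) := by exact_mod_cast hint
    nlinarith
  refine ⟨min 0 (sInf U), min_le_left _ _, ?_⟩
  intro p q hpq
  rcases lt_trichotomy q 0 with hq | hq | hq
  · -- q < 0 : upper bound case
    set q' : ℕ := (-q).toNat with hq'
    have hq'pos : 0 < q' := by omega
    have hq'cast : ((q' : ℕ) : ℤ) = -q := by omega
    have hmemU : (p : ℝ) / (q' : ℝ) ∈ U := by
      refine ⟨p, q', hq'pos, ?_, rfl⟩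
      have : (p : A) - (q' : A) * f = (p : A) + (q : A) * f := by
        have : ((q' : ℕ) : A) = ((-q : ℤ) : A) := by exact_mod_cast congrArg (fun z : ℤ => (z : A)) hq'cast
        rw [this]; push_cast; ring
      rw [this]; exact hpq
    have h1 : sInf U ≤ (p : ℝ) / (q' : ℝ) := csInf_le hbdd hmemU
    have h2 : min 0 (sInf U) ≤ (p : ℝ) / (q' : ℝ) := le_trans (min_le_right _ _) h1
    have hq'R : (0 : ℝ) < (q' : ℝ)  := by exact_mod_cast hq'pos
    rw [le_div_iff₀ hq'R] at h2
    have hqq' : (q : ℝ) = -(q' : ℝ) := by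
      have : ((q' : ℕ) : ℝ) = ((-q : ℤ) : ℝ) := by exact_mod_cast congrArg (fun z : ℤ => (z : ℝ)) hq'cast
      rw [this]; push_cast; ring
    rw [hqq']
    nlinarith
  · -- q = 0
    subst hq
    simp only [Int.cast_zero, zero_mul, add_zero] at hpq ⊢
    have := intM hnd p (by simpa using hpq)
    exact_mod_cast this
  · -- q > 0 : lower bound case
    have hp : 0 ≤ p := by
      by_contra hp
      push_neg at hp
      have h1 : ((q.toNat : ℕ) : A) * f ∈ M := by
        have heq : ((q.toNat : ℕ) : A) * f = ((p : A) + (q : A) * f) + (((-p).toNat : ℕ) : A) := by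
          have e1 : ((q.toNat : ℕ) : ℤ) = q := by omega
          have e2 : (((-p).toNat : ℕ) : ℤ) = -p := by omega
          have e1' : ((q.toNat : ℕ) : A) = (q : A) := by exact_mod_cast congrArg (fun z : ℤ => (z : A)) e1
          have e2' : (((-p).toNat : ℕ) : A) = ((-p : ℤ) : A) := by exact_mod_cast congrArg (fun z : ℤ => (z : A)) e2
          rw [e1', e2']; push_cast; ring
        rw [heq]
        exact hMadd _ hpq _ (natM' _)
      exact hnf q.toNat (by omega) h1
    -- show -(p)/q ≤ min 0 (sInf U)
    have hqR : (0 : ℝ) < (q : ℝ) := by exact_mod_cast hq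
    have hlow : -(p : ℝ) / (q : ℝ) ≤ min 0 (sInf U) := by
      refine le_min ?_ ?_
      · apply div_nonpos_of_nonpos_of_nonneg
        · have : (0:ℝ) ≤ (p:ℝ) := by exact_mod_cast hp
          linarith
        · exact le_of_lt hqR
      · refine le_csInf hUne ?_
        rintro r ⟨p', q', hq', hp'q', rfl⟩
        -- combine q'•(p + qf) + q.toNat•(p' - q'f)
        have hmem : ((q' * p + q * p' : ℤ) : A) ∈ M := by
          have heq : ((q' * p + q * p' : ℤ) : A) =
              (q' : A) * ((p : A) + (q : A) * f) + ((q.toNat : ℕ) : A) * ((p' : A) - (q' : A) * f) := by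
            have e1 : ((q.toNat : ℕ) : A) = (q : A) := by
              have : ((q.toNat : ℕ) : ℤ) = q := by omega
              exact_mod_cast congrArg (fun z : ℤ => (z : A)) this
            rw [e1]; push_cast; ring
          rw [heq]
          exact hMadd _ (hnatM q' _ hpq) _ (hnatM q.toNat _ hp'q')
        have hint : (0 : ℤ) ≤ q' * p + q * p' := intM hnd _ hmem
        have hintR : (0 : ℝ) ≤ (q' : ℝ) * (p : ℝ) + (q : ℝ) * (p' : ℝ) := by exact_mod_cast hint
        have hq'R : (0 : ℝ) < (q' : ℝ) := by exact_mod_cast hq'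
        rw [div_le_div_iff₀ hqR hq'R]
        nlinarith
    rw [div_le_iff₀ hqR] at hlow
    nlinarith [min_le_left (0:ℝ) (sInf U)]


theorem exists_state
    (hMadd : ∀ x ∈ M, ∀ y ∈ M, x + y ∈ M)
    (hM0 : (0 : A) ∈ M)
    (hnatM : ∀ n : ℕ, ∀ x ∈ M, (n : A) * x ∈ M)
    (natM' : ∀ n : ℕ, (n : A) ∈ M)
    (archM1 : ∀ a : A, ∃ n : ℕ, (n : A) - a ∈ M)
    (archM2 : ∀ a : A, ∃ n : ℕ, (n : A) + a ∈ M)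
    (hnd : ¬ ∃ k : ℕ, 0 < k ∧ (-(k : A)) ∈ M)
    (f : A) (hnf : ∀ q : ℕ, 0 < q → (q : A) * f ∉ M) :
    ∃ L : A → ℝ, (∀ x y, L (x + y) = L x + L y) ∧ L 1 = 1 ∧ (∀ m ∈ M, 0 ≤ L m) ∧ L f ≤ 0 := by
  classical
  obtain ⟨β, hβ0, hβpos⟩ := exists_beta hMadd hnatM natM' archM1 archM2 hnd f hnf
  set 𝒮 : Set (Set (A × ℝ)) := {G | IsGraph M G ∧ (f, β) ∈ G} with h𝒮
  -- the initial graph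
  set G₀ : Set (A × ℝ) :=
    {x | ∃ p q : ℤ, x = ((p : A) + (q : A) * f, (p : ℝ) + (q : ℝ) * β)} with hG₀def
  have hG₀ : G₀ ∈ 𝒮 := by
    refine ⟨⟨⟨1, 0, by simp⟩, ?_, ?_, ?_⟩, ⟨0, 1, by simp⟩⟩
    · rintro _ ⟨p1, q1, rfl⟩ _ ⟨p2, q2, rfl⟩
      exact ⟨p1 + p2, q1 + q2, by rw [Prod.ext_iff]; constructor <;> · simp; push_cast; ring⟩
    · rintro _ ⟨p1, q1, rfl⟩
      exact ⟨-p1, -q1, by rw [Prod.ext_iff]; constructor <;> · simp; push_cast; ring⟩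
    · rintro _ ⟨p1, q1, rfl⟩ hmem
      exact hβpos p1 q1 hmem
  -- Zorn
  have hchain : ∀ c ⊆ 𝒮, IsChain (· ⊆ ·) c → c.Nonempty →
      ∃ ub ∈ 𝒮, ∀ s ∈ c, s ⊆ ub := by
    intro c hc hchain ⟨G1, hG1⟩
    refine ⟨⋃₀ c, ⟨⟨?_, ?_, ?_, ?_⟩, ?_⟩, fun s hs => Set.subset_sUnion_of_mem hs⟩
    · exact ⟨G1, hG1, (hc hG1).1.1⟩
    · rintro p ⟨Gp, hGp, hpGp⟩ q ⟨Gq, hGq, hqGq⟩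
      rcases hchain.total hGp hGq with h | h
      · exact ⟨Gq, hGq, (hc hGq).1.2.1 _ (h hpGp) _ hqGq⟩
      · exact ⟨Gp, hGp, (hc hGp).1.2.1 _ hpGp _ (h hqGq)⟩
    · rintro p ⟨Gp, hGp, hpGp⟩
      exact ⟨Gp, hGp, (hc hGp).1.2.2.1 _ hpGp⟩
    · rintro p ⟨Gp, hGp, hpGp⟩ hp1
      exact (hc hGp).1.2.2.2 _ hpGp hp1
    · exact ⟨G1, hG1, (hc hG1).2⟩
  obtain ⟨G, hG₀G, hGmax⟩ := zorn_subset_nonempty 𝒮 hchain G₀ hG₀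
  have hG : IsGraph M G := hGmax.prop.1
  have hfβ : (f, β) ∈ G := hGmax.prop.2
  -- totality
  have htot : ∀ a : A, ∃ t : ℝ, (a, t) ∈ G := by
    intro a
    by_contra hna
    push_neg at hna
    set Lo : Set ℝ :=
      {r : ℝ | ∃ (h : A) (t : ℝ) (q : ℕ), 0 < q ∧ (h, t) ∈ G ∧ h + (q : A) * a ∈ M ∧
        r = -t / (q : ℝ)} with hLo
    have hintG : ∀ n : ℕ, ((n : A), (n : ℝ)) ∈ G := by
      intro n
      have := hG.zsmul hG.1 (n : ℤ)
      simpa using this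
    have hLone : Lo.Nonempty := by
      obtain ⟨n₀, hn₀⟩ := archM2 a
      refine ⟨-(n₀ : ℝ) / ((1:ℕ) : ℝ), (n₀ : A), (n₀ : ℝ), 1, one_pos, hintG n₀, ?_, rfl⟩
      have : (n₀ : A) + ((1:ℕ) : A) * a = (n₀ : A) + a := by push_cast; ring
      rw [this]; exact hn₀
    obtain ⟨n₁, hn₁⟩ := archM1 a
    have hLoub : ∀ r ∈ Lo, r ≤ (n₁ : ℝ) := by
      rintro r ⟨h, t, q, hq, hhG, hM, rfl⟩
      have hn₁' : (n₁ : A) - ((1:ℕ) : A) * a ∈ M := by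
        have e : (n₁ : A) - ((1:ℕ) : A) * a = (n₁ : A) - a := by push_cast; ring
        rw [e]; exact hn₁
      have := hG.cross hMadd hnatM hhG (hintG n₁) hM hn₁'
      have hqR : (0 : ℝ) < (q : ℝ) := by exact_mod_cast hq
      rw [div_le_iff₀ hqR]
      simp only [Nat.cast_one, one_mul] at this
      nlinarith
    have hbddLo : BddAbove Lo := ⟨(n₁ : ℝ), hLoub⟩
    set α := sSup Lo with hα
    have hαlow : ∀ (h : A) (t : ℝ) (q : ℕ), 0 < q → (h, t) ∈ G → h + (q : A) * a ∈ M →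
        -t / (q : ℝ) ≤ α := by
      intro h t q hq hhG hM
      exact le_csSup hbddLo ⟨h, t, q, hq, hhG, hM, rfl⟩
    have hαhigh : ∀ (h' : A) (t' : ℝ) (q' : ℕ), 0 < q' → (h', t') ∈ G →
        h' - (q' : A) * a ∈ M → α ≤ t' / (q' : ℝ) := by
      intro h' t' q' hq' hh'G hM'
      refine csSup_le hLone ?_
      rintro r ⟨h, t, q, hq, hhG, hM, rfl⟩
      have := hG.cross hMadd hnatM hhG hh'G hM hM'
      have hqR : (0 : ℝ) < (q : ℝ) := by exact_mod_cast hq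
      have hq'R : (0 : ℝ) < (q' : ℝ) := by exact_mod_cast hq'
      rw [div_le_div_iff₀ hqR hq'R]
      nlinarith
    set G' : Set (A × ℝ) :=
      {x | ∃ (h : A) (t : ℝ) (q : ℤ), (h, t) ∈ G ∧ x = (h + (q : A) * a, t + (q : ℝ) * α)}
      with hG'def
    have hGG' : G ⊆ G' := by
      intro p hp
      exact ⟨p.1, p.2, 0, hp, by simp⟩
    have hG'mem : G' ∈ 𝒮 := by
      refine ⟨⟨hGG' hG.1, ?_, ?_, ?_⟩, hGG' hfβ⟩
      · rintro _ ⟨h1, t1, q1, h1G, rfl⟩ _ ⟨h2, t2, q2, h2G, rfl⟩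
        refine ⟨h1 + h2, t1 + t2, q1 + q2, hG.2.1 _ h1G _ h2G, ?_⟩
        rw [Prod.ext_iff]; constructor <;> · simp; push_cast; ring
      · rintro _ ⟨h1, t1, q1, h1G, rfl⟩
        refine ⟨-h1, -t1, -q1, hG.2.2.1 _ h1G, ?_⟩
        rw [Prod.ext_iff]; constructor <;> · simp; push_cast; ring
      · rintro _ ⟨h1, t1, q1, h1G, rfl⟩ hmem
        simp only at hmem ⊢
        rcases lt_trichotomy q1 0 with hq1 | hq1 | hq1
        · -- q1 < 0 : use upper bound
          set q' : ℕ := (-q1).toNat with hq'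
          have hq'pos : 0 < q' := by omega
          have hq'cast : ((q' : ℕ) : ℤ) = -q1 := by omega
          have hcastA : ((q' : ℕ) : A) = -((q1 : ℤ) : A) := by
            have := congrArg (fun z : ℤ => (z : A)) hq'cast
            push_cast at this
            exact_mod_cast this
          have hcastR : ((q' : ℕ) : ℝ) = -((q1 : ℤ) : ℝ) := by
            have := congrArg (fun z : ℤ => (z : ℝ)) hq'cast
            push_cast at this
            exact_mod_cast this
          have hM' : h1 - (q' : A) * a ∈ M := by
            rw [hcastA]
            convert hmem using 1
            ring
          have := hαhigh h1 t1 q' hq'pos h1G hM'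
          have hq'R : (0 : ℝ) < (q' : ℝ) := by exact_mod_cast hq'pos
          rw [le_div_iff₀ hq'R] at this
          rw [show ((q1 : ℤ) : ℝ) = -((q' : ℕ) : ℝ) by rw [hcastR]; ring]
          nlinarith
        · subst hq1
          simp only [Int.cast_zero, zero_mul, add_zero] at hmem ⊢
          exact hG.2.2.2 _ h1G hmem
        · -- q1 > 0 : use lower bound
          set q' : ℕ := q1.toNat with hq'
          have hq'pos : 0 < q' := by omega
          have hq'cast : ((q' : ℕ) : ℤ) = q1 := by omega
          have hcastA : ((q' : ℕ) : A) = ((q1 : ℤ) : A) := by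
            exact_mod_cast congrArg (fun z : ℤ => (z : A)) hq'cast
          have hcastR : ((q' : ℕ) : ℝ) = ((q1 : ℤ) : ℝ) := by
            exact_mod_cast congrArg (fun z : ℤ => (z : ℝ)) hq'cast
          have hM' : h1 + (q' : A) * a ∈ M := by rw [hcastA]; exact hmem
          have := hαlow h1 t1 q' hq'pos h1G hM'
          have hq'R : (0 : ℝ) < (q' : ℝ) := by exact_mod_cast hq'pos
          rw [div_le_iff₀ hq'R] at this
          rw [← hcastR]
          nlinarith
    have hsub : G' ⊆ G := hGmax.2 hG'mem hGG'
    have : (a, α) ∈ G' := ⟨0, 0, 1, hG.zero, by simp⟩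
    exact hna α (hsub this)
  -- extract the state
  set L : A → ℝ := fun a => Classical.choose (htot a) with hLdef
  have hL : ∀ a : A, (a, L a) ∈ G := fun a => Classical.choose_spec (htot a)
  have huniq : ∀ (a : A) (t : ℝ), (a, t) ∈ G → t = L a := by
    intro a t hat
    have h1 : ((a - a : A), (t - L a : ℝ)) ∈ G := by
      have := hG.2.1 _ hat _ (hG.2.2.1 _ (hL a))
      convert this using 2 <;> simp <;> ring
    have h2 : ((a - a : A), (L a - t : ℝ)) ∈ G := by
      have := hG.2.1 _ (hL a) _ (hG.2.2.1 _ hat)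
      convert this using 2 <;> simp <;> ring
    have e1 : (0 : ℝ) ≤ t - L a := by
      have := hG.2.2.2 _ h1 (by simpa using hM0)
      simpa using this
    have e2 : (0 : ℝ) ≤ L a - t := by
      have := hG.2.2.2 _ h2 (by simpa using hM0)
      simpa using this
    linarith
  refine ⟨L, ?_, ?_, ?_, ?_⟩
  · intro x y
    have := hG.2.1 _ (hL x) _ (hL y)
    exact (huniq _ _ this).symm
  · exact (huniq _ _ hG.1).symm
  · intro m hm
    exact hG.2.2.2 _ (hL m) hm
  · have := huniq _ _ hfβ
    rw [← this]
    exact hβ0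

end KDAux


open KDAux in
/-- Representation Theorem (Stone–Krivine–Kadison–Dubois): if `M` is a module over an
archimedean subsemiring `S` of `A` and `f ∈ A` satisfies `ϕ(f) > 0` for every ring
homomorphism `ϕ : A → ℝ` nonnegative on `M`, then `nf ∈ M` for some `n ∈ ℕ`. -/
theorem representation_theorem {A : Type*} [CommRing A] (S M : Set A)
    (hS0 : (0 : A) ∈ S) (hS1 : (1 : A) ∈ S)
    (hSadd : ∀ x ∈ S, ∀ y ∈ S, x + y ∈ S)
    (hSmul : ∀ x ∈ S, ∀ y ∈ S, x * y ∈ S)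
    (harch : ∀ a : A, ∃ n : ℕ, (n : A) - a ∈ S)
    (hM0 : (0 : A) ∈ M) (hM1 : (1 : A) ∈ M)
    (hMadd : ∀ x ∈ M, ∀ y ∈ M, x + y ∈ M)
    (hSM : ∀ s ∈ S, ∀ m ∈ M, s * m ∈ M)
    (f : A) (hf : ∀ ϕ : A →+* ℝ, (∀ m ∈ M, 0 ≤ ϕ m) → 0 < ϕ f) :
    ∃ n : ℕ, 0 < n ∧ n • f ∈ M := by
  classical
  by_contra hcon
  push_neg at hcon
  -- basic consequences
  have hSsubM : ∀ s ∈ S, s ∈ M := fun s hs => by simpa using hSM s hs 1 hM1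
  have hnatS : ∀ n : ℕ, (n : A) ∈ S := natS hS0 hS1 hSadd
  have hnatM : ∀ n : ℕ, ∀ x ∈ M, (n : A) * x ∈ M := fun n x hx => hSM _ (hnatS n) _ hx
  have natM' : ∀ n : ℕ, (n : A) ∈ M := fun n => hSsubM _ (hnatS n)
  have archM1 : ∀ a : A, ∃ n : ℕ, (n : A) - a ∈ M := by
    intro a; obtain ⟨n, hn⟩ := harch a; exact ⟨n, hSsubM _ hn⟩
  have archM2 : ∀ a : A, ∃ n : ℕ, (n : A) + a ∈ M := by
    intro a; obtain ⟨n, hn⟩ := harch (-a)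
    exact ⟨n, by have := hSsubM _ hn; rwa [sub_neg_eq_add] at this⟩
  have hnd : ¬ ∃ k : ℕ, 0 < k ∧ (-(k : A)) ∈ M := by
    rintro ⟨k, hk, hkM⟩
    have := degenerate hMadd hM0 hM1 archM2 hk hkM f
    exact hcon 1 one_pos (by simpa using this)
  have hnf : ∀ q : ℕ, 0 < q → (q : A) * f ∉ M := by
    intro q hq hmem
    exact hcon q hq (by rwa [nsmul_eq_mul])
  -- a state with L f ≤ 0
  obtain ⟨L₀, hL₀add, hL₀one, hL₀pos, hL₀f⟩ :=
    exists_state hMadd hM0 hnatM natM' archM1 archM2 hnd f hnf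
  -- the state space
  set K : Set (A → ℝ) :=
    {L | (∀ x y, L (x + y) = L x + L y) ∧ L 1 = 1 ∧ ∀ m ∈ M, 0 ≤ L m} with hK
  have hL₀K : L₀ ∈ K := ⟨hL₀add, hL₀one, hL₀pos⟩
  -- helper : values of states on integers and bounds
  have hLnat : ∀ L ∈ K, ∀ n : ℕ, L ((n : A)) = n := by
    rintro L ⟨hadd, h1, _⟩ n
    have := Lint hadd h1 (n : ℤ)
    simpa using this
  -- K is bounded
  set bup : A → ℝ := fun a => ((Classical.choose (archM1 a) : ℕ) : ℝ) with hbup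
  set blo : A → ℝ := fun a => -((Classical.choose (archM2 a) : ℕ) : ℝ) with hblo
  have hKsub : K ⊆ Set.pi Set.univ (fun a => Set.Icc (blo a) (bup a)) := by
    rintro L hL a -
    obtain ⟨hadd, h1, hpos⟩ := hL
    constructor
    · have h2 := hpos _ (Classical.choose_spec (archM2 a))
      have h3 : L ((Classical.choose (archM2 a) : ℕ) + a) =
          ((Classical.choose (archM2 a) : ℕ) : ℝ) + L a := by
        rw [hadd]; rw [hLnat L ⟨hadd, h1, hpos⟩]
      rw [h3] at h2
      simp only [hblo]
      linarith
    · have h2 := hpos _ (Classical.choose_spec (archM1 a))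
      have h3 : L ((Classical.choose (archM1 a) : ℕ) - a) =
          ((Classical.choose (archM1 a) : ℕ) : ℝ) - L a := by
        rw [Lsub hadd]; rw [hLnat L ⟨hadd, h1, hpos⟩]
      rw [h3] at h2
      simp only [hbup]
      linarith
  have hKclosed : IsClosed K := by
    have e : K = {L : A → ℝ | ∀ x y, L (x + y) = L x + L y} ∩
        ({L : A → ℝ | L 1 = 1} ∩ {L : A → ℝ | ∀ m ∈ M, 0 ≤ L m}) := by
      ext L; exact ⟨fun h => ⟨h.1, h.2.1, h.2.2⟩, fun h => ⟨h.1, h.2.1, h.2.2⟩⟩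
    rw [e]
    refine IsClosed.inter ?_ (IsClosed.inter ?_ ?_)
    · have e2 : {L : A → ℝ | ∀ x y, L (x + y) = L x + L y} =
          ⋂ (x : A) (y : A), {L : A → ℝ | L (x + y) = L x + L y} := by
        ext L; simp
      rw [e2]
      exact isClosed_iInter fun x => isClosed_iInter fun y =>
        isClosed_eq (continuous_apply _) ((continuous_apply x).add (continuous_apply y))
    · exact isClosed_eq (continuous_apply _) continuous_const
    · have e3 : {L : A → ℝ | ∀ m ∈ M, 0 ≤ L m} =
          ⋂ (m : A) (_ : m ∈ M), {L : A → ℝ | 0 ≤ L m} := by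
        ext L; simp
      rw [e3]
      exact isClosed_iInter fun m => isClosed_iInter fun _ =>
        isClosed_le continuous_const (continuous_apply _)
  have hKcompact : IsCompact K := by
    refine IsCompact.of_isClosed_subset ?_ hKclosed hKsub
    exact isCompact_univ_pi fun a => isCompact_Icc
  have hKconvex : Convex ℝ K := by
    rintro L1 ⟨h1add, h11, h1pos⟩ L2 ⟨h2add, h21, h2pos⟩ a b ha hb hab
    refine ⟨?_, ?_, ?_⟩
    · intro x y
      simp only [Pi.add_apply, Pi.smul_apply, smul_eq_mul, h1add, h2add]
      ring
    · simp only [Pi.add_apply, Pi.smul_apply, smul_eq_mul, h11, h21]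
      linarith
    · intro m hm
      have := h1pos m hm; have := h2pos m hm
      simp only [Pi.add_apply, Pi.smul_apply, smul_eq_mul]
      nlinarith
  -- minimizer of evaluation at f
  obtain ⟨L₁, hL₁K, hL₁min⟩ :=
    hKcompact.exists_isMinOn ⟨L₀, hL₀K⟩ (continuous_apply f).continuousOn
  have hL₁min' : ∀ L ∈ K, L₁ f ≤ L f := fun L hL => hL₁min hL
  set T : Set (A → ℝ) := K ∩ {L | L f = L₁ f} with hT
  have hTne : T.Nonempty := ⟨L₁, hL₁K, rfl⟩
  have hTclosed : IsClosed T :=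
    hKclosed.inter (isClosed_eq (continuous_apply _) continuous_const)
  have hTcompact : IsCompact T := hKcompact.inter_right
    (isClosed_eq (continuous_apply _) continuous_const)
  have hTconvex : Convex ℝ T := by
    rintro x ⟨hxK, hxf⟩ y ⟨hyK, hyf⟩ a b ha hb hab
    refine ⟨hKconvex hxK hyK ha hb hab, ?_⟩
    simp only [Set.mem_setOf_eq, Pi.add_apply, Pi.smul_apply, smul_eq_mul] at hxf hyf ⊢
    rw [hxf, hyf]
    have : a * L₁ f + b * L₁ f = (a + b) * L₁ f := by ring
    rw [this, hab, one_mul]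
  obtain ⟨Lst, hLstExT⟩ := hTcompact.extremePoints_nonempty hTne
  obtain ⟨hLstT, hLstExt⟩ := hLstExT
  obtain ⟨hLstK, hLstf⟩ := hLstT
  -- Lst is an extreme point of K
  have hExtK : ∀ x ∈ K, ∀ y ∈ K, Lst ∈ openSegment ℝ x y → x = Lst ∧ y = Lst := by
    intro x hx y hy hseg
    obtain ⟨a, b, ha, hb, hab, hsum⟩ := hseg
    have hfx : x f ≥ L₁ f := hL₁min' x hx
    have hfy : y f ≥ L₁ f := hL₁min' y hy
    have hfsum : a * x f + b * y f = L₁ f := by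
      have := congrFun hsum f
      simp only [Pi.add_apply, Pi.smul_apply, smul_eq_mul] at this
      rw [this]
      exact hLstf
    have hzero : a * (x f - L₁ f) + b * (y f - L₁ f) = 0 := by
      linear_combination hfsum - L₁ f * hab
    have t1 : 0 ≤ a * (x f - L₁ f) := mul_nonneg ha.le (by linarith)
    have t2 : 0 ≤ b * (y f - L₁ f) := mul_nonneg hb.le (by linarith)
    have hx0 : a * (x f - L₁ f) = 0 := by linarith
    have hy0 : b * (y f - L₁ f) = 0 := by linarith
    have hxf : x f = L₁ f := by
      rcases mul_eq_zero.mp hx0 with h | h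
      · exact absurd h (ne_of_gt ha)
      · linarith
    have hyf : y f = L₁ f := by
      rcases mul_eq_zero.mp hy0 with h | h
      · exact absurd h (ne_of_gt hb)
      · linarith
    exact ⟨hLstExt ⟨hx, hxf⟩ ⟨hy, hyf⟩ ⟨a, b, ha, hb, hab, hsum⟩,
      hLstExt ⟨hy, hyf⟩ ⟨hx, hxf⟩ ⟨b, a, hb, ha, by rw [add_comm]; exact hab, by rw [add_comm]; exact hsum⟩⟩
  obtain ⟨hadd, h1, hpos⟩ := hLstK
  -- zero-coefficient lemma
  have gbound : ∀ s' ∈ S, Lst s' = 0 → ∀ x : A, Lst (s' * x) = 0 := by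
    intro s' hs' hz x
    obtain ⟨r, hr⟩ := archM2 x
    obtain ⟨r', hr'⟩ := archM1 x
    have e1 : (0:ℝ) ≤ Lst (s' * (((r:ℕ) : A) + x)) := hpos _ (hSM s' hs' _ hr)
    have e2 : (0:ℝ) ≤ Lst (s' * (((r':ℕ) : A) - x)) := hpos _ (hSM s' hs' _ hr')
    have e3 : Lst (s' * (((r:ℕ) : A) + x)) = (r:ℝ) * Lst s' + Lst (s' * x) := by
      have : s' * (((r:ℕ) : A) + x) = ((r:ℕ) : A) * s' + s' * x := by ring
      rw [this, hadd]
      congr 1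
      have := Lintmul hadd (r : ℤ) s'
      simpa using this
    have e4 : Lst (s' * (((r':ℕ) : A) - x)) = (r':ℝ) * Lst s' - Lst (s' * x) := by
      have : s' * (((r':ℕ) : A) - x) = ((r':ℕ) : A) * s' - s' * x := by ring
      rw [this, Lsub hadd]
      congr 1
      have := Lintmul hadd (r' : ℤ) s'
      simpa using this
    rw [e3, hz] at e1
    rw [e4, hz] at e2
    linarith
  -- multiplicativity on S
  have mulS : ∀ s ∈ S, ∀ x : A, Lst (s * x) = Lst s * Lst x := by
    intro s hs x
    obtain ⟨k₀, hk₀⟩ := harch s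
    set k : ℕ := k₀ + 1 with hkdef
    have hkS : ((k:ℕ) : A) - s ∈ S := by
      have := hSadd _ hk₀ _ hS1
      have e : ((k:ℕ) : A) - s = ((k₀:ℕ) : A) - s + 1 := by rw [hkdef]; push_cast; ring
      rwa [e]
    set α := Lst s with hα
    have hα0 : 0 ≤ α := hpos s (hSsubM s hs)
    have hαk : α ≤ (k:ℝ) := by
      have := hpos _ (hSsubM _ hkS)
      rw [Lsub hadd, hLnat Lst ⟨hadd, h1, hpos⟩] at this
      linarith
    have key : ∀ y : A, Lst (s * y) + Lst ((((k:ℕ) : A) - s) * y) = (k:ℝ) * Lst y := by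
      intro y
      have e : s * y + (((k:ℕ) : A) - s) * y = ((k:ℕ) : A) * y := by ring
      have := hadd (s * y) ((((k:ℕ) : A) - s) * y)
      rw [e] at this
      rw [← this]
      have h5 := Lintmul hadd (k : ℤ) y
      simpa using h5
    rcases eq_or_lt_of_le hα0 with hz | hαpos
    · rw [gbound s hs hz.symm x, ← hz]
      ring
    rcases eq_or_lt_of_le hαk with hkk | hαlt
    · have hz2 : Lst (((k:ℕ) : A) - s) = 0 := by
        rw [Lsub hadd, hLnat Lst ⟨hadd, h1, hpos⟩, ← hα, hkk]; ring
      have h6 := key x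
      rw [gbound _ hkS hz2 x] at h6
      rw [hkk]
      linarith
    -- interior case : use extremality
    · set L₁' : A → ℝ := fun y => Lst (s * y) / α with hL₁'
      set L₂' : A → ℝ := fun y => Lst ((((k:ℕ) : A) - s) * y) / ((k:ℝ) - α) with hL₂'
      have hkα : (0:ℝ) < (k:ℝ) - α := by linarith
      have hkpos : (0:ℝ) < (k:ℝ) := by positivity
      have hL₁K' : L₁' ∈ K := by
        refine ⟨?_, ?_, ?_⟩
        · intro u v
          simp only [hL₁']
          rw [mul_add, hadd]
          ring
        · simp only [hL₁', mul_one]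
          field_simp
          rw [hα]
        · intro m hm
          have := hpos _ (hSM s hs m hm)
          simp only [hL₁']
          positivity
      have hL₂K' : L₂' ∈ K := by
        refine ⟨?_, ?_, ?_⟩
        · intro u v
          simp only [hL₂']
          rw [mul_add, hadd]
          ring
        · simp only [hL₂', mul_one]
          rw [Lsub hadd, hLnat Lst ⟨hadd, h1, hpos⟩]
          field_simp
          rw [hα]
        · intro m hm
          have h' := hpos _ (hSM _ hkS m hm)
          simp only [hL₂']
          positivity
      have hseg : Lst ∈ openSegment ℝ L₁' L₂' := by
        refine ⟨α / k, ((k:ℝ) - α) / k, by positivity, by positivity, by rw [← add_div, div_eq_one_iff_eq hkpos.ne']; ring, ?_⟩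
        funext y
        simp only [Pi.add_apply, Pi.smul_apply, smul_eq_mul, hL₁', hL₂']
        have hkey := key y
        field_simp
        linear_combination hkey
      have := (hExtK L₁' hL₁K' L₂' hL₂K' hseg).1
      have hLx : L₁' x = Lst x := by rw [this]
      simp only [hL₁'] at hLx
      field_simp at hLx
      linarith [hLx]
  -- full multiplicativity
  have hmul : ∀ a b : A, Lst (a * b) = Lst a * Lst b := by
    intro a b
    obtain ⟨n, hn⟩ := harch (-a)
    have hnS : ((n:ℕ) : A) + a ∈ S := by rwa [sub_neg_eq_add] at hn
    have e1 : Lst ((((n:ℕ) : A) + a) * b) = Lst (((n:ℕ) : A) + a) * Lst b := mulS _ hnS b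
    have e2 : Lst (((n:ℕ) : A) + a) = (n:ℝ) + Lst a := by
      rw [hadd, hLnat Lst ⟨hadd, h1, hpos⟩]
    have e3 : (((n:ℕ) : A) + a) * b = ((n:ℕ) : A) * b + a * b := by ring
    have e4 : Lst (((n:ℕ) : A) * b) = (n:ℝ) * Lst b := by
      have := Lintmul hadd (n : ℤ) b
      simpa using this
    rw [e3, hadd, e4, e2] at e1
    nlinarith [e1]
  -- build the ring homomorphism
  set φ : A →+* ℝ :=
    { toFun := Lst
      map_one' := h1
      map_mul' := hmul
      map_zero' := Lzero hadd
      map_add' := hadd } with hφ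
  have hφpos : ∀ m ∈ M, 0 ≤ φ m := hpos
  have := hf φ hφpos
  have hφf : φ f = Lst f := rfl
  rw [hφf, hLstf] at this
  have hle := hL₁min' L₀ hL₀K
  linarith
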